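/- Let d ≥ 1, let v : Fin N → ℝ^d be a family of voter ideal points, and let I be a nonempty subset of Fin N. Then there exist a point p ∈ ℝ^d and a radius r ≥ 0 with I = {i : dist(v i, p) ≤ r} if and only if there exists a point p ∈ ℝ^d such that dist(v i, p) < dist(v j, p) for every i ∈ I and every j ∉ I; that is, I arises as the set of voters inside a TIOLI outcome sphere if and only if I is the set of |I| nearest voter ideal points to some point of ℝ^d (a nonempty cell of the |I|-th order Voronoi diagram of the ideal points). -/
import Mathlib


/-- A nonempty coalition `I` arises as the set of voters inside a TIOLI outcome sphere
(i.e. some closed ball contains exactly the ideal points of the voters in `I`) iff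
there is a point of `ℝ^d` whose `|I|` nearest voter ideal points are exactly those of
`I` — that is, iff `I` corresponds to a nonempty cell of the `|I|`-th order Voronoi
diagram of the ideal points. -/
theorem tioli_inside_coalition_iff_voronoi_cell (d N : ℕ) (hd : 1 ≤ d)
    (v : Fin N → EuclideanSpace ℝ (Fin d)) (I : Set (Fin N)) (hI : I.Nonempty) :
    (∃ p : EuclideanSpace ℝ (Fin d), ∃ r : ℝ, 0 ≤ r ∧ I = {i | dist (v i) p ≤ r}) ↔
      (∃ p : EuclideanSpace ℝ (Fin d),
        ∀ i ∈ I, ∀ j ∉ I, dist (v i) p < dist (v j) p) := by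
  constructor
  · rintro ⟨p, r, hr, hIr⟩
    refine ⟨p, fun i hi j hj => ?_⟩
    have hi' : dist (v i) p ≤ r := by rwa [hIr] at hi
    have hj' : ¬ dist (v j) p ≤ r := by rwa [hIr] at hj
    linarith [not_le.mp hj']
  · rintro ⟨p, hp⟩
    classical
    have hfin : I.Finite := Set.toFinite I
    set s := hfin.toFinset with hs
    have hsne : s.Nonempty := by
      rwa [hs, Set.Finite.toFinset_nonempty]
    set r := s.sup' hsne (fun i => dist (v i) p) with hr
    obtain ⟨i₀, hi₀, hri₀⟩ := Finset.exists_mem_eq_sup' hsne (fun i => dist (v i) p)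
    have hi₀I : i₀ ∈ I := hfin.mem_toFinset.mp hi₀
    refine ⟨p, r, le_trans dist_nonneg hri₀.ge, ?_⟩
    ext j
    simp only [Set.mem_setOf_eq]
    constructor
    · intro hjI
      exact Finset.le_sup' (fun i => dist (v i) p) (hfin.mem_toFinset.mpr hjI)
    · intro hjr
      by_contra hjI
      have h2 := hp i₀ hi₀I j hjI
      have h3 : r = dist (v i₀) p := hri₀
      linarith
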